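/- Define C_α for α ∈ (0,1)∖{1/2} as follows. For α ∈ (1/2,1), C_α = (2α − 1)/(√3 − 1 + 2α). For α ∈ (0,1/2), let λ_α ∈ (0,1) be the unique solution of λ·F_α'(λ) = F_α(λ), set σ_α = λ_α·√(F_α''(λ_α)/F_α(λ_α)) and r_α = (1 + F_α(−λ_α)/F_α(λ_α))/2 (the total mass of the even integers under the tilted distribution with generating function z ↦ F_α(λ_α z)/F_α(λ_α)), and set C_α = (σ_α² + r_α)/(2σ_α). Then C_α ~ (2/√3)·(α − 1/2) as α ↓ 1/2, and C_α ~ (3^{3/4}/8)·(1/2 − α)^{−1/2} as α ↑ 1/2. -/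

import Mathlib

open Real Filter Set Asymptotics

/-- The generating function `F_α(z) = (2α - 1 + √3 z + (1-z)^{3/2})/(2α - 1 + √3)`,
for real `z ∈ [-1, 1]` (with `(1-z)^{3/2}` the real power). -/
noncomputable def Falpha (α : ℝ) (z : ℝ) : ℝ :=
  (2 * α - 1 + Real.sqrt 3 * z + (1 - z) ^ ((3 : ℝ) / 2))
    / (2 * α - 1 + Real.sqrt 3)

/-! ### Auxiliary definitions -/

noncomputable def sfun (α : ℝ) : ℝ := -2 * Real.sin (Real.arcsin (2*α - 1) / 3)

noncomputable def Nf (s : ℝ) : ℝ := (s^3 - 3*s)/2 + Real.sqrt 3 * (1 - s^2) + s^3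
noncomputable def Mf (s : ℝ) : ℝ :=
  (s^3 - 3*s)/2 - Real.sqrt 3 * (1 - s^2) + (2 - s^2) ^ ((3:ℝ)/2)
noncomputable def hfun (s : ℝ) : ℝ := 3 * (1 - s^2) / (4 * (Real.sqrt 3 - 3/2 * s))
noncomputable def Gg (s : ℝ) : ℝ :=
  (((1 - s^2) * Real.sqrt (3 / (4 * s * Nf s)))^2 + (1 + Mf s / Nf s)/2)
    / (2 * ((1 - s^2) * Real.sqrt (3 / (4 * s * Nf s))))

lemma sqrt3_gt : (3:ℝ)/2 < Real.sqrt 3 := by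
  have := Real.sq_sqrt (by norm_num : (0:ℝ) ≤ 3)
  nlinarith [Real.sqrt_nonneg 3]

/-! ### Derivatives of `Falpha` -/

lemma Falpha_hasDerivAt (α : ℝ) {x : ℝ} (hx : x < 1) :
    HasDerivAt (Falpha α)
      ((Real.sqrt 3 - 3 / 2 * Real.sqrt (1 - x)) / (2 * α - 1 + Real.sqrt 3)) x := by
  have h1 : HasDerivAt (fun z : ℝ => 1 - z) (-1) x := (hasDerivAt_id x).const_sub 1
  have h2 := h1.rpow_const (p := (3:ℝ)/2) (Or.inr (by norm_num))
  have h3 : HasDerivAt (fun z : ℝ => 2 * α - 1 + Real.sqrt 3 * z)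
      (Real.sqrt 3 * 1) x := ((hasDerivAt_id x).const_mul (Real.sqrt 3)).const_add (2 * α - 1)
  have h4 := (h3.add h2).div_const (2 * α - 1 + Real.sqrt 3)
  refine h4.congr_deriv ?_
  rw [show (3:ℝ)/2 - 1 = 1/2 by norm_num, ← Real.sqrt_eq_rpow]
  ring

lemma deriv_Falpha (α : ℝ) {x : ℝ} (hx : x < 1) :
    deriv (Falpha α) x
      = (Real.sqrt 3 - 3 / 2 * Real.sqrt (1 - x)) / (2 * α - 1 + Real.sqrt 3) :=
  (Falpha_hasDerivAt α hx).deriv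

lemma deriv2_Falpha (α : ℝ) {x : ℝ} (hx : x < 1) :
    deriv (deriv (Falpha α)) x
      = (3 / (4 * Real.sqrt (1 - x))) / (2 * α - 1 + Real.sqrt 3) := by
  have hev : deriv (Falpha α) =ᶠ[nhds x]
      fun z => (Real.sqrt 3 - 3 / 2 * Real.sqrt (1 - z)) / (2 * α - 1 + Real.sqrt 3) := by
    filter_upwards [Iio_mem_nhds hx] with z hz
    exact deriv_Falpha α hz
  rw [hev.deriv_eq]
  have hs0 : (0:ℝ) < 1 - x := by linarith
  have hsq : (0:ℝ) < Real.sqrt (1 - x) := Real.sqrt_pos.mpr hs0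
  have hs : HasDerivAt (fun z : ℝ => Real.sqrt (1 - z)) (1 / (2 * Real.sqrt (1 - x)) * (-1)) x :=
    (Real.hasDerivAt_sqrt (ne_of_gt hs0)).comp x ((hasDerivAt_id x).const_sub 1)
  have h5 := ((hs.const_mul (3/2 : ℝ)).const_sub (Real.sqrt 3)).div_const
      (2 * α - 1 + Real.sqrt 3)
  rw [h5.deriv]
  field_simp
  ring

/-! ### Algebraic facts -/

lemma Nf_factor (s : ℝ) : Nf s = (1 - s^2) * (Real.sqrt 3 - 3/2 * s) := by
  unfold Nf; ring

lemma Nf_pos {s : ℝ} (hs : s ∈ Set.Ioo (0:ℝ) 1) : 0 < Nf s := by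
  rw [Nf_factor]; have h := sqrt3_gt; obtain ⟨h0, h1⟩ := hs
  apply mul_pos <;> nlinarith

lemma hfun_pos {s : ℝ} (hs : s ∈ Set.Ioo (0:ℝ) 1) : 0 < hfun s := by
  unfold hfun; have h := sqrt3_gt; obtain ⟨h0, h1⟩ := hs
  apply div_pos <;> nlinarith

lemma rpow_sq_three_halves {s : ℝ} (hs : 0 ≤ s) : (s^2) ^ ((3:ℝ)/2) = s^3 := by
  rw [show (3:ℝ)/2 = (1/2) * 3 by norm_num, Real.rpow_mul (sq_nonneg s),
    show ((3:ℝ)) = ((3:ℕ):ℝ) by norm_num, Real.rpow_natCast, ← Real.sqrt_eq_rpow,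
    Real.sqrt_sq hs]

section eval
variable {α s : ℝ} (hs : s ∈ Set.Ioo (0:ℝ) 1) (hc : s^3 - 3*s = 2*(2*α-1)) (hα : 0 < α)

omit hs hc in
include hα in
lemma Dpos : 0 < 2 * α - 1 + Real.sqrt 3 := by
  have := sqrt3_gt; nlinarith

include hs hc

lemma Falpha_at_l (hα : 0 < α) :
    Falpha α (1 - s^2) = Nf s / (2 * α - 1 + Real.sqrt 3) := by
  unfold Falpha
  congr 1
  rw [show (1:ℝ) - (1 - s^2) = s^2 by ring, rpow_sq_three_halves hs.1.le]
  unfold Nf; linarith [hc]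

lemma Falpha_at_negl (hα : 0 < α) :
    Falpha α (-(1 - s^2)) = Mf s / (2 * α - 1 + Real.sqrt 3) := by
  unfold Falpha
  congr 1
  rw [show (1 : ℝ) - -(1 - s^2) = 2 - s^2 by ring]
  unfold Mf; linarith [hc]

lemma deriv_Falpha_at_l' (hder : deriv (Falpha α) (1 - s^2)
      = (Real.sqrt 3 - 3 / 2 * Real.sqrt (1 - (1 - s^2))) / (2 * α - 1 + Real.sqrt 3)) :
    deriv (Falpha α) (1 - s^2)
      = (Real.sqrt 3 - 3 / 2 * s) / (2 * α - 1 + Real.sqrt 3) := by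
  rw [hder, show (1:ℝ) - (1 - s^2) = s^2 by ring, Real.sqrt_sq hs.1.le]

lemma fixed_point (hα : 0 < α)
    (hder : deriv (Falpha α) (1 - s^2)
      = (Real.sqrt 3 - 3 / 2 * s) / (2 * α - 1 + Real.sqrt 3)) :
    (1 - s^2) * deriv (Falpha α) (1 - s^2) = Falpha α (1 - s^2) := by
  rw [hder, Falpha_at_l hs hc hα, Nf_factor, mul_div_assoc]

end eval

/-! ### The key algebraic identity for `Gg` -/

lemma Gg_eq {s : ℝ} (hs : s ∈ Set.Ioo (0:ℝ) 1) :
    Gg s = (hfun s + (1 + Mf s / Nf s)/2 * s)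
      / (2 * Real.sqrt s * Real.sqrt (hfun s)) := by
  have h := sqrt3_gt
  obtain ⟨h0, h1⟩ := hs
  have hN : 0 < Nf s := Nf_pos ⟨h0, h1⟩
  have hh : 0 < hfun s := hfun_pos ⟨h0, h1⟩
  have hss : (0:ℝ) < 1 - s^2 := by nlinarith
  have hden : Real.sqrt 3 - 3/2 * s ≠ 0 := by nlinarith
  have hs2 : (1:ℝ) - s^2 ≠ 0 := ne_of_gt hss
  have hsne : s ≠ 0 := ne_of_gt h0
  have key : (1 - s^2) * Real.sqrt (3 / (4 * s * Nf s))
      = Real.sqrt (hfun s) / Real.sqrt s := by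
    rw [← Real.sqrt_sq hss.le, ← Real.sqrt_mul (sq_nonneg _), ← Real.sqrt_div hh.le]
    congr 1
    rw [Nf_factor]
    unfold hfun
    have hQ : (4:ℝ)*s*((1-s^2)*(Real.sqrt 3 - 3/2*s)) ≠ 0 :=
      mul_ne_zero (mul_ne_zero (by norm_num) hsne) (mul_ne_zero hs2 hden)
    have hQ2 : (4*(Real.sqrt 3 - 3/2*s))*s ≠ 0 :=
      mul_ne_zero (mul_ne_zero (by norm_num) hden) hsne
    rw [div_div, ← mul_div_assoc, div_eq_div_iff hQ hQ2]
    ring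
  unfold Gg
  rw [key]
  have e1 : (Real.sqrt (hfun s) / Real.sqrt s)^2 = hfun s / s := by
    rw [div_pow, Real.sq_sqrt hh.le, Real.sq_sqrt h0.le]
  rw [e1]
  have hsqs : Real.sqrt s ≠ 0 := ne_of_gt (Real.sqrt_pos.mpr h0)
  have hsqh : Real.sqrt (hfun s) ≠ 0 := ne_of_gt (Real.sqrt_pos.mpr hh)
  have hs_eq : Real.sqrt s * Real.sqrt s = s := Real.mul_self_sqrt h0.le
  field_simp
  rw [Real.sq_sqrt h0.le]
  ring

/-! ### Properties of `sfun` -/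

lemma sfun_cubic {α : ℝ} (hα : α ∈ Set.Ioo (0:ℝ) (1/2)) :
    (sfun α)^3 - 3 * sfun α = 2 * (2*α - 1) := by
  obtain ⟨h0, h1⟩ := hα
  have hs : Real.sin (3 * (Real.arcsin (2*α-1) / 3)) = 2*α - 1 := by
    rw [mul_div_cancel₀ _ (by norm_num : (3:ℝ) ≠ 0)]
    exact Real.sin_arcsin (by linarith) (by linarith)
  rw [Real.sin_three_mul] at hs
  unfold sfun
  nlinarith [hs]

lemma sfun_mem {α : ℝ} (hα : α ∈ Set.Ioo (0:ℝ) (1/2)) : sfun α ∈ Set.Ioo (0:ℝ) 1 := by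
  obtain ⟨h0, h1⟩ := hα
  have hpi : (0:ℝ) < Real.pi := Real.pi_pos
  have ha1 : -(Real.pi/2) < Real.arcsin (2*α-1) :=
    Real.neg_pi_div_two_lt_arcsin.mpr (by linarith)
  have ha2 : Real.arcsin (2*α-1) < 0 := Real.arcsin_lt_zero.mpr (by linarith)
  set t := Real.arcsin (2*α-1) / 3 with ht
  have ht1 : -(Real.pi/6) < t := by rw [ht]; linarith
  have ht2 : t < 0 := by rw [ht]; linarith
  constructor
  · have : Real.sin t < 0 := by
      apply Real.sin_neg_of_neg_of_neg_pi_lt ht2; linarith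
    unfold sfun; rw [← ht]; linarith
  · have hmono := Real.strictMonoOn_sin (a := -(Real.pi/6)) (b := t)
      ⟨by linarith, by linarith⟩ ⟨by linarith, by linarith⟩ ht1
    rw [Real.sin_neg, Real.sin_pi_div_six] at hmono
    unfold sfun; rw [← ht]; linarith

lemma sfun_cont : Continuous sfun := by
  apply Continuous.mul continuous_const
  exact Real.continuous_sin.comp
    ((Real.continuous_arcsin.comp (by continuity)).div_const 3)

lemma sfun_half : sfun (1/2) = 0 := by
  norm_num [sfun]

lemma tendsto_sfun : Tendsto sfun (nhdsWithin (1/2:ℝ) (Set.Iio (1/2))) (nhds 0) := by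
  have := (sfun_cont.tendsto (1/2)).mono_left (nhdsWithin_le_nhds (s := Set.Iio (1/2:ℝ)))
  rwa [sfun_half] at this

lemma tendsto_ratio_su :
    Tendsto (fun α => sfun α / (1/2 - α)) (nhdsWithin (1/2:ℝ) (Set.Iio (1/2)))
      (nhds (4/3)) := by
  have hψ : HasDerivAt (fun c : ℝ => Real.sin (Real.arcsin c / 3)) (1/3) 0 := by
    have hg : HasDerivAt (fun c : ℝ => Real.arcsin c / 3) ((1/Real.sqrt (1 - 0^2))/3) 0 :=
      (Real.hasDerivAt_arcsin (by norm_num) (by norm_num)).div_const 3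
    have := hg.sin
    convert this using 1
    norm_num [Real.arcsin_zero]
  rw [hasDerivAt_iff_tendsto_slope] at hψ
  have hm : Tendsto (fun α : ℝ => 2*α - 1) (nhdsWithin (1/2:ℝ) (Set.Iio (1/2)))
      (nhdsWithin (0:ℝ) {0}ᶜ) := by
    apply tendsto_nhdsWithin_of_tendsto_nhds_of_eventually_within
    · have : Tendsto (fun α : ℝ => 2*α - 1) (nhds (1/2:ℝ)) (nhds (2*(1/2) - 1)) :=
        Continuous.tendsto (by continuity) _
      norm_num at this
      exact this.mono_left nhdsWithin_le_nhds
    · filter_upwards [self_mem_nhdsWithin] with α (hα : α < 1/2)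
      simp only [Set.mem_compl_iff, Set.mem_singleton_iff]
      intro h; rw [sub_eq_zero] at h; linarith
  have hcomp := (hψ.comp hm).const_mul (4:ℝ)
  norm_num at hcomp
  apply hcomp.congr'
  filter_upwards [self_mem_nhdsWithin] with α (hα : α < 1/2)
  have hm0 : 2*α - 1 ≠ 0 := by intro h; rw [sub_eq_zero] at h; linarith
  have h2 : (1/2:ℝ) - α ≠ 0 := by intro h; rw [sub_eq_zero] at h; linarith
  simp only [Function.comp, slope_def_field, Real.arcsin_zero, zero_div, Real.sin_zero,
    sub_zero, sfun]
  rw [← mul_div_assoc, div_eq_div_iff hm0 h2]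
  ring

/-- Theorem 1.3: the scaling constants `C_α` — equal to `(2α-1)/(√3-1+2α)` for
`α ∈ (1/2,1)`, and to `(σ_α² + r_α)/(2σ_α)` for `α ∈ (0,1/2)`, where `λ_α ∈ (0,1)`
solves `λ F_α'(λ) = F_α(λ)`, `σ_α = λ_α √(F_α''(λ_α)/F_α(λ_α))` and
`r_α = (1 + F_α(-λ_α)/F_α(λ_α))/2` — satisfy
`C_α ~ (2/√3)(α - 1/2)` as `α ↓ 1/2` and `C_α ~ (3^{3/4}/8)(1/2 - α)^{-1/2}` as
`α ↑ 1/2`. -/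
theorem scaling_constants_near_critical (Cmap : ℝ → ℝ)
    (hC_sup : ∀ α ∈ Set.Ioo (1 / 2 : ℝ) 1,
      Cmap α = (2 * α - 1) / (Real.sqrt 3 - 1 + 2 * α))
    (hC_sub : ∀ α ∈ Set.Ioo (0 : ℝ) (1 / 2),
      ∃ l ∈ Set.Ioo (0 : ℝ) 1,
        l * deriv (Falpha α) l = Falpha α l
        ∧ (∀ l' ∈ Set.Ioo (0 : ℝ) 1,
            l' * deriv (Falpha α) l' = Falpha α l' → l' = l)
        ∧ Cmap α =
            ((l * Real.sqrt (deriv (deriv (Falpha α)) l / Falpha α l)) ^ 2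
                + (1 + Falpha α (-l) / Falpha α l) / 2)
              / (2 * (l * Real.sqrt (deriv (deriv (Falpha α)) l / Falpha α l)))) :
    (Cmap ~[nhdsWithin (1 / 2) (Set.Ioi (1 / 2))]
        fun α : ℝ => 2 / Real.sqrt 3 * (α - 1 / 2))
    ∧ (Cmap ~[nhdsWithin (1 / 2) (Set.Iio (1 / 2))]
        fun α : ℝ => (3 : ℝ) ^ ((3 : ℝ) / 4) / 8 * (1 / 2 - α) ^ (-(1 : ℝ) / 2)) := by
  have hs3 : (0:ℝ) < Real.sqrt 3 := by linarith [sqrt3_gt]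
  constructor
  · -- supercritical side
    have hmem : Set.Ioo (1/2:ℝ) 1 ∈ nhdsWithin (1/2:ℝ) (Set.Ioi (1/2)) :=
      Ioo_mem_nhdsGT_of_mem (by norm_num)
    apply Asymptotics.isEquivalent_of_tendsto_one
    · have hTT : Tendsto (fun α : ℝ => Real.sqrt 3 / (Real.sqrt 3 - 1 + 2*α))
          (nhds (1/2:ℝ)) (nhds (Real.sqrt 3 / (Real.sqrt 3 - 1 + 2*(1/2)))) := by
        apply Tendsto.div tendsto_const_nhds (Continuous.tendsto (by continuity) _)
        nlinarith [sqrt3_gt]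
      have hval : Real.sqrt 3 / (Real.sqrt 3 - 1 + 2*(1/2:ℝ)) = 1 := by
        rw [show Real.sqrt 3 - 1 + 2*(1/2:ℝ) = Real.sqrt 3 by ring]
        exact div_self (by positivity)
      rw [hval] at hTT
      have hT := hTT.mono_left (nhdsWithin_le_nhds (s := Set.Ioi (1/2:ℝ)))
      apply hT.congr'
      filter_upwards [hmem] with α hα
      have h1 : (1/2:ℝ) < α := hα.1
      have hd : Real.sqrt 3 - 1 + 2*α ≠ 0 := by nlinarith [sqrt3_gt]
      have ha : α - 1/2 ≠ 0 := by intro h; rw [sub_eq_zero] at h; linarith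
      simp only [Pi.div_apply]
      rw [hC_sup α hα]
      have hne2 : 2 / Real.sqrt 3 * (α - 1/2) ≠ 0 :=
        mul_ne_zero (by positivity) ha
      rw [eq_div_iff hne2]
      field_simp
  · -- subcritical side
    set K : ℝ := (3:ℝ)^((3:ℝ)/4)/8 with hK
    have hKpos : 0 < K := by rw [hK]; positivity
    have hmem : Set.Ioo (0:ℝ) (1/2) ∈ nhdsWithin (1/2:ℝ) (Set.Iio (1/2)) :=
      Ioo_mem_nhdsLT_of_mem (by norm_num)
    -- Step 1 : Cmap = Gg ∘ sfun on (0, 1/2)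
    have hCG : ∀ α ∈ Set.Ioo (0:ℝ) (1/2), Cmap α = Gg (sfun α) := by
      intro α hα
      obtain ⟨l, hlmem, hleq, huniq, hCval⟩ := hC_sub α hα
      set s := sfun α with hsdef
      have hsm := sfun_mem hα
      have hc := sfun_cubic hα
      have hα0 : 0 < α := hα.1
      have hD := Dpos hα0
      have hDne : (2*α - 1 + Real.sqrt 3) ≠ 0 := ne_of_gt hD
      have hlt1 : (1:ℝ) - s^2 < 1 := by nlinarith [hsm.1]
      have hder := deriv_Falpha_at_l' hsm hc (deriv_Falpha α hlt1)
      have hl : (1 - s^2 : ℝ) = l :=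
        huniq _ ⟨by nlinarith [hsm.1, hsm.2], hlt1⟩ (fixed_point hsm hc hα0 hder)
      have hNpos := Nf_pos hsm
      have hsne : s ≠ 0 := ne_of_gt hsm.1
      have hNne : Nf s ≠ 0 := ne_of_gt hNpos
      have h2 : deriv (deriv (Falpha α)) (1 - s^2)
          = (3 / (4*s)) / (2*α - 1 + Real.sqrt 3) := by
        rw [deriv2_Falpha α hlt1, show (1:ℝ) - (1 - s^2) = s^2 by ring,
          Real.sqrt_sq hsm.1.le]
      have hrat : deriv (deriv (Falpha α)) (1 - s^2) / Falpha α (1 - s^2)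
          = 3 / (4 * s * Nf s) := by
        rw [h2, Falpha_at_l hsm hc hα0]
        field_simp
        ring
      have hrat2 : Falpha α (-(1 - s^2)) / Falpha α (1 - s^2) = Mf s / Nf s := by
        rw [Falpha_at_negl hsm hc hα0, Falpha_at_l hsm hc hα0]
        field_simp
        rw [hsdef]
        ring
      rw [hCval, ← hl, hrat, hrat2]
      rfl
    -- Step 2 : limits
    have hsf := tendsto_sfun
    have hd0 : (4:ℝ)*(Real.sqrt 3 - 3/2*(0:ℝ)) ≠ 0 := by
      have h : (4:ℝ)*(Real.sqrt 3 - 3/2*(0:ℝ)) = 4*Real.sqrt 3 := by ring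
      rw [h]; positivity
    have hconth : ContinuousAt hfun 0 := by
      unfold hfun
      exact ContinuousAt.div (by fun_prop) (by fun_prop) hd0
    have th : Tendsto (fun α => hfun (sfun α))
        (nhdsWithin (1/2:ℝ) (Set.Iio (1/2))) (nhds (hfun 0)) := hconth.tendsto.comp hsf
    have hN0 : Nf 0 = Real.sqrt 3 := by unfold Nf; norm_num
    have hB : ContinuousAt (fun s => (1 + Mf s / Nf s)/2) 0 := by
      apply ContinuousAt.div _ continuousAt_const (by norm_num)
      apply ContinuousAt.add continuousAt_const
      apply ContinuousAt.div
      · unfold Mf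
        apply ContinuousAt.add (by fun_prop)
        apply ContinuousAt.rpow_const (by fun_prop)
        left; norm_num
      · unfold Nf; fun_prop
      · rw [hN0]; positivity
    have tB := hB.tendsto.comp hsf
    have tBs : Tendsto (fun α => (1 + Mf (sfun α)/Nf (sfun α))/2 * sfun α)
        (nhdsWithin (1/2:ℝ) (Set.Iio (1/2))) (nhds ((1 + Mf 0/Nf 0)/2 * 0)) := by
      exact Tendsto.mul tB hsf
    have tsqh : Tendsto (fun α => Real.sqrt (hfun (sfun α)))
        (nhdsWithin (1/2:ℝ) (Set.Iio (1/2))) (nhds (Real.sqrt (hfun 0))) :=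
      (Real.continuous_sqrt.tendsto _).comp th
    have h3m : Real.sqrt 3 * Real.sqrt 3 = 3 := Real.mul_self_sqrt (by norm_num)
    have hh0 : hfun 0 = Real.sqrt 3 / 4 := by
      unfold hfun
      rw [div_eq_div_iff hd0 (by norm_num : (4:ℝ) ≠ 0)]
      linear_combination (-4:ℝ) * h3m
    have tus : Tendsto (fun α => (1/2 - α)/sfun α)
        (nhdsWithin (1/2:ℝ) (Set.Iio (1/2))) (nhds (3/4)) := by
      have h := tendsto_ratio_su.inv₀ (by norm_num : (4/3:ℝ) ≠ 0)
      rw [show ((4/3:ℝ))⁻¹ = 3/4 by norm_num] at h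
      exact h.congr (fun α => by rw [inv_div])
    have t4 : Tendsto (fun α => Real.sqrt ((1/2 - α)/sfun α))
        (nhdsWithin (1/2:ℝ) (Set.Iio (1/2))) (nhds (Real.sqrt (3/4))) :=
      (Real.continuous_sqrt.tendsto _).comp tus
    have hdne : 2 * Real.sqrt (hfun 0) ≠ 0 := by
      rw [hh0]; positivity
    have hbig : Tendsto (fun α =>
        (hfun (sfun α) + (1 + Mf (sfun α)/Nf (sfun α))/2 * sfun α)
          / (2 * Real.sqrt (hfun (sfun α))) * Real.sqrt ((1/2 - α)/sfun α) / K)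
        (nhdsWithin (1/2:ℝ) (Set.Iio (1/2)))
        (nhds ((hfun 0 + (1 + Mf 0/Nf 0)/2 * 0) / (2 * Real.sqrt (hfun 0))
          * Real.sqrt (3/4) / K)) := by
      exact (((th.add tBs).div (tsqh.const_mul 2) hdne).mul t4).div_const K
    -- Step 3 : the limit equals 1
    have hq : (0:ℝ) < (3:ℝ)^((1:ℝ)/4) := Real.rpow_pos_of_pos (by norm_num) _
    set q := (3:ℝ)^((1:ℝ)/4) with hqdef
    have hq2 : q^2 = Real.sqrt 3 := by
      rw [hqdef, ← Real.rpow_natCast ((3:ℝ)^((1:ℝ)/4)) 2, ← Real.rpow_mul (by norm_num)]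
      rw [Real.sqrt_eq_rpow]; norm_num
    have hq3 : (3:ℝ)^((3:ℝ)/4) = q^3 := by
      rw [hqdef, ← Real.rpow_natCast ((3:ℝ)^((1:ℝ)/4)) 3, ← Real.rpow_mul (by norm_num)]
      norm_num
    have hsq0 : Real.sqrt (hfun 0) = q/2 := by
      rw [hh0, ← hq2, show q^2/4 = (q/2)^2 by ring, Real.sqrt_sq (by positivity)]
    have h34 : Real.sqrt ((3:ℝ)/4) = q^2/2 := by
      have h : ((3:ℝ)/4) = (Real.sqrt 3/2)^2 := by
        rw [div_pow, Real.sq_sqrt (by norm_num : (0:ℝ) ≤ 3)]; norm_num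
      rw [h, Real.sqrt_sq (by positivity), hq2]
    have hV : (hfun 0 + (1 + Mf 0/Nf 0)/2 * 0) / (2 * Real.sqrt (hfun 0))
        * Real.sqrt (3/4) / K = 1 := by
      rw [hsq0, h34, hh0, hK, hq3, ← hq2, mul_zero, add_zero]
      rw [div_eq_one_iff_eq (by positivity)]
      field_simp
      ring
    rw [hV] at hbig
    -- Step 4 : conclude
    apply Asymptotics.isEquivalent_of_tendsto_one
    · apply hbig.congr'
      filter_upwards [hmem] with α hα
      have hsm := sfun_mem hα
      have hu : (0:ℝ) < 1/2 - α := by linarith [hα.2]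
      have hhp := hfun_pos hsm
      have hsqs : Real.sqrt (sfun α) ≠ 0 := ne_of_gt (Real.sqrt_pos.mpr hsm.1)
      have hsqh : Real.sqrt (hfun (sfun α)) ≠ 0 := ne_of_gt (Real.sqrt_pos.mpr hhp)
      have hsqu : Real.sqrt (1/2 - α) ≠ 0 := ne_of_gt (Real.sqrt_pos.mpr hu)
      have hru : (1/2 - α)^(-(1:ℝ)/2) = (Real.sqrt (1/2 - α))⁻¹ := by
        rw [show (-(1:ℝ)/2) = -(1/2) by norm_num, Real.rpow_neg hu.le, Real.sqrt_eq_rpow]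
      have hsd : Real.sqrt ((1/2 - α)/sfun α)
          = Real.sqrt (1/2 - α)/Real.sqrt (sfun α) := Real.sqrt_div hu.le _
      simp only [Pi.div_apply]
      rw [hCG α hα, Gg_eq hsm, hsd, hru]
      field_simp
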